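/- arXiv:1408.6285 — 2 statements merged into one kernel-verified Lean document; each statement's English description precedes it below -/
import Mathlib

section
/- Let Π be a protocol with inputs (X,Y), transcript M, and outputs (A,B), where party 1 outputs A and party 2 outputs B, and B - (Y,M) - X is a Markov chain. Then I(X;M|Y) ≥ H(B|Y) - H(A,B|X,Y) + I(X,A ; M | Y,B). -/
namespace Paper

open Classical in
/-- Probability of an event under a pmf `μ` on a finite sample space. -/
noncomputable def pe {Ω : Type*} [Fintype Ω] (μ : Ω → ℝ) (E : Ω → Prop) : ℝ :=
  ∑ ω, if E ω then μ ω else 0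

/-- Probability that random variable `X` takes value `a`. -/
noncomputable def prob {Ω α : Type*} [Fintype Ω] (μ : Ω → ℝ) (X : Ω → α) (a : α) : ℝ :=
  pe μ (fun ω => X ω = a)

/-- `μ` is a probability mass function. -/
def IsPMF {Ω : Type*} [Fintype Ω] (μ : Ω → ℝ) : Prop :=
  (∀ ω, 0 ≤ μ ω) ∧ ∑ ω, μ ω = 1

open Classical in
/-- Shannon entropy (in bits) of the random variable `X` under `μ`. -/
noncomputable def H {Ω α : Type*} [Fintype Ω] (μ : Ω → ℝ) (X : Ω → α) : ℝ :=
  -∑ a ∈ Finset.univ.image X, prob μ X a * Real.logb 2 (prob μ X a)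

/-- Mutual information `I(X;Y)` in bits. -/
noncomputable def mutInfo {Ω α β : Type*} [Fintype Ω] (μ : Ω → ℝ)
    (X : Ω → α) (Y : Ω → β) : ℝ :=
  H μ X + H μ Y - H μ (fun ω => (X ω, Y ω))

/-- Conditional entropy `H(X|Y)` in bits. -/
noncomputable def condEnt {Ω α β : Type*} [Fintype Ω] (μ : Ω → ℝ)
    (X : Ω → α) (Y : Ω → β) : ℝ :=
  H μ (fun ω => (X ω, Y ω)) - H μ Y

/-- Conditional mutual information `I(X;Y|Z)` in bits. -/
noncomputable def condMutInfo {Ω α β γ : Type*} [Fintype Ω] (μ : Ω → ℝ)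
    (X : Ω → α) (Y : Ω → β) (Z : Ω → γ) : ℝ :=
  H μ (fun ω => (X ω, Z ω)) + H μ (fun ω => (Y ω, Z ω))
    - H μ (fun ω => (X ω, Y ω, Z ω)) - H μ Z

end Paper

namespace Paper

open Classical

variable {Ω : Type*} [Fintype Ω] {α β : Type*}

lemma le_prob (μ : Ω → ℝ) (hμ : ∀ ω, 0 ≤ μ ω) (X : Ω → α) (ω : Ω) :
    μ ω ≤ prob μ X (X ω) := by
  unfold prob pe
  have := Finset.single_le_sum (f := fun ω' => if X ω' = X ω then μ ω' else 0)
    (fun i _ => by split <;> simp [hμ i]) (Finset.mem_univ ω)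
  simpa using this

lemma prob_mono (μ : Ω → ℝ) (hμ : ∀ ω, 0 ≤ μ ω) (X : Ω → α) (Y : Ω → β)
    (h : ∀ ω₁ ω₂, X ω₁ = X ω₂ → Y ω₁ = Y ω₂) (ω : Ω) :
    prob μ X (X ω) ≤ prob μ Y (Y ω) := by
  unfold prob pe
  apply Finset.sum_le_sum
  intro i _
  dsimp only
  by_cases hi : X i = X ω
  · simp [hi, h _ _ hi]
  · rw [if_neg hi]
    split <;> simp [hμ i]

lemma H_eq (μ : Ω → ℝ) (X : Ω → α) :
    H μ X = -∑ ω, μ ω * Real.logb 2 (prob μ X (X ω)) := by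
  unfold H
  congr 1
  have key : ∀ a, prob μ X a * Real.logb 2 (prob μ X a)
      = ∑ ω, if X ω = a then μ ω * Real.logb 2 (prob μ X (X ω)) else 0 := by
    intro a
    unfold prob pe
    rw [Finset.sum_mul]
    apply Finset.sum_congr rfl
    intro ω _
    by_cases h : X ω = a
    · simp [h]
    · simp [h]
  rw [Finset.sum_congr rfl (fun a _ => key a), Finset.sum_comm]
  apply Finset.sum_congr rfl
  intro ω _
  rw [Finset.sum_ite_eq (Finset.univ.image X) (X ω)
    (fun _ => μ ω * Real.logb 2 (prob μ X (X ω)))]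
  simp

lemma H_mono (μ : Ω → ℝ) (hμ : ∀ ω, 0 ≤ μ ω) (X : Ω → α) (Y : Ω → β)
    (h : ∀ ω₁ ω₂, X ω₁ = X ω₂ → Y ω₁ = Y ω₂) :
    H μ Y ≤ H μ X := by
  rw [H_eq, H_eq, neg_le_neg_iff]
  apply Finset.sum_le_sum
  intro ω _
  rcases eq_or_lt_of_le (hμ ω) with h0 | h0
  · simp [← h0]
  · have hx : 0 < prob μ X (X ω) := lt_of_lt_of_le h0 (le_prob μ hμ X ω)
    have hxy := prob_mono μ hμ X Y h ω
    exact mul_le_mul_of_nonneg_left (Real.logb_le_logb_of_le one_lt_two hx hxy) (hμ ω)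

lemma H_congr (μ : Ω → ℝ) (hμ : ∀ ω, 0 ≤ μ ω) (X : Ω → α) (Y : Ω → β)
    (h : ∀ ω₁ ω₂, X ω₁ = X ω₂ ↔ Y ω₁ = Y ω₂) :
    H μ X = H μ Y :=
  le_antisymm (H_mono μ hμ Y X fun ω₁ ω₂ hh => (h ω₁ ω₂).2 hh)
    (H_mono μ hμ X Y fun ω₁ ω₂ hh => (h ω₁ ω₂).1 hh)


/-- if `B - (Y,M) - X` is a Markov chain (i.e. `I(X;B|Y,M)=0`),
then `I(X;M|Y) ≥ H(B|Y) - H(A,B|X,Y) + I(X,A;M|Y,B)`. -/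
theorem infoCost₁_lower_bound {Ω 𝒳 𝒴 𝒜 ℬ ℳ : Type} [Fintype Ω]
    (μ : Ω → ℝ) (hμ : IsPMF μ)
    (X : Ω → 𝒳) (Y : Ω → 𝒴) (A : Ω → 𝒜) (B : Ω → ℬ) (M : Ω → ℳ)
    (hMarkov : condMutInfo μ X B (fun ω => (Y ω, M ω)) = 0) :
    condMutInfo μ X M Y
      ≥ condEnt μ B Y - condEnt μ (fun ω => (A ω, B ω)) (fun ω => (X ω, Y ω))
        + condMutInfo μ (fun ω => (X ω, A ω)) M (fun ω => (Y ω, B ω)) := by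
  obtain ⟨hpos, -⟩ := hμ
  have c1 : H μ (fun ω => ((A ω, B ω), (X ω, Y ω)))
      = H μ (fun ω => ((X ω, A ω), (Y ω, B ω))) :=
    H_congr μ hpos _ _ (by intro ω₁ ω₂; simp only [Prod.ext_iff]; tauto)
  have c2 : H μ (fun ω => (B ω, (Y ω, M ω))) = H μ (fun ω => (M ω, (Y ω, B ω))) :=
    H_congr μ hpos _ _ (by intro ω₁ ω₂; simp only [Prod.ext_iff]; tauto)
  have c3 : H μ (fun ω => (X ω, (Y ω, M ω))) = H μ (fun ω => (X ω, (M ω, Y ω))) :=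
    H_congr μ hpos _ _ (by intro ω₁ ω₂; simp only [Prod.ext_iff]; tauto)
  have c4 : H μ (fun ω => (B ω, Y ω)) = H μ (fun ω => (Y ω, B ω)) :=
    H_congr μ hpos _ _ (by intro ω₁ ω₂; simp only [Prod.ext_iff]; tauto)
  have c5 : H μ (fun ω => (Y ω, M ω)) = H μ (fun ω => (M ω, Y ω)) :=
    H_congr μ hpos _ _ (by intro ω₁ ω₂; simp only [Prod.ext_iff]; tauto)
  have mono : H μ (fun ω => (X ω, (B ω, (Y ω, M ω))))
      ≤ H μ (fun ω => ((X ω, A ω), (M ω, (Y ω, B ω)))) :=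
    H_mono μ hpos _ _ (by intro ω₁ ω₂ h; simp only [Prod.ext_iff] at *; tauto)
  simp only [condMutInfo, condEnt] at hMarkov ⊢
  linarith

end Paper
end

section
/- Let (X,Y) be jointly distributed over finite 𝒳×𝒴 and Q over 𝒬 with I(X;Y|Q)=0. Fix α ∈ (0,1) and call a rectangle r ⊆ 𝒳×𝒴 'small' if Pr[(X,Y)∈r] < α. There exists a random variable R over rectangles, jointly distributed with (X,Y,Q), such that: (1) for every q, r with Pr[Q=q, R=r] > 0, the conditional distribution p_{XY|Q=q,R=r} equals p_{XY} conditioned on (X,Y)∈r; and (2) for every q, the union L_q of all small rectangles r with Pr[Q=q,R=r]>0 satisfies Pr[(X,Y) ∈ L_q] ≤ 2√α. -/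
namespace Paper
open Classical

lemma pe_nonneg {Ω : Type*} [Fintype Ω] {μ : Ω → ℝ} (hμ : ∀ ω, 0 ≤ μ ω) (E : Ω → Prop) :
    0 ≤ pe μ E := by
  apply Finset.sum_nonneg; intro i _; split <;> simp [hμ i]

lemma pe_mono {Ω : Type*} [Fintype Ω] {μ : Ω → ℝ} (hμ : ∀ ω, 0 ≤ μ ω) {E F : Ω → Prop}
    (h : ∀ ω, E ω → F ω) : pe μ E ≤ pe μ F := by
  apply Finset.sum_le_sum; intro i _
  by_cases hE : E i
  · simp [hE, h i hE]
  · simp only [hE, if_false]; split <;> simp [hμ i]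

lemma pe_or_le {Ω : Type*} [Fintype Ω] {μ : Ω → ℝ} (hμ : ∀ ω, 0 ≤ μ ω) (E F : Ω → Prop) :
    pe μ (fun ω => E ω ∨ F ω) ≤ pe μ E + pe μ F := by
  rw [pe, pe, pe, ← Finset.sum_add_distrib]
  apply Finset.sum_le_sum; intro i _
  by_cases hE : E i <;> by_cases hF : F i <;> simp [hE, hF, hμ i]

lemma pe_eq_zero_of_none {Ω : Type*} [Fintype Ω] (μ : Ω → ℝ) {E : Ω → Prop}
    (h : ∀ ω, ¬ E ω) : pe μ E = 0 := by
  apply Finset.sum_eq_zero; intro i _; simp [h i]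

lemma H_eq_sum {Ω α : Type*} [Fintype Ω] (μ : Ω → ℝ) (X : Ω → α) :
    H μ X = -∑ ω, μ ω * Real.logb 2 (prob μ X (X ω)) := by
  rw [H]
  congr 1
  have : ∀ a ∈ Finset.univ.image X, prob μ X a * Real.logb 2 (prob μ X a)
      = ∑ ω, (if X ω = a then μ ω * Real.logb 2 (prob μ X a) else 0) := by
    intro a _
    rw [prob, pe, Finset.sum_mul]
    congr 1; funext ω; split <;> simp
  rw [Finset.sum_congr rfl this, Finset.sum_comm]
  apply Finset.sum_congr rfl
  intro ω _
  rw [Finset.sum_ite_eq (Finset.univ.image X) (X ω)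
    (fun a => μ ω * Real.logb 2 (prob μ X a)), if_pos (Finset.mem_image_of_mem X (Finset.mem_univ ω))]

/-- Layer-cake decomposition of a nonneg function into a chain of indicator layers. -/
lemma layer_decomp {X : Type} [Fintype X] (a : X → ℝ) (ha : ∀ x, 0 ≤ a x) :
    ∃ w : Finset X → ℝ, (∀ A, 0 ≤ w A) ∧
      (∀ A, w A ≠ 0 → ∀ x ∈ A, a x ≠ 0) ∧
      (∀ A B, w A ≠ 0 → w B ≠ 0 → A ⊆ B ∨ B ⊆ A) ∧
      (∀ x, ∑ A : Finset X, w A * (if x ∈ A then 1 else 0) = a x) := by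
  classical
  generalize hn : (Finset.univ.filter (fun x => a x ≠ 0)).card = n
  induction n using Nat.strong_induction_on generalizing a with
  | _ n ih =>
    by_cases hSe : (Finset.univ.filter (fun x : X => a x ≠ 0)) = ∅
    · refine ⟨fun _ => 0, by simp, by simp, by simp, ?_⟩
      intro x
      have hx : a x = 0 := by
        by_contra h
        have : x ∈ Finset.univ.filter (fun x : X => a x ≠ 0) := by simp [h]
        simp [hSe] at this
      simp [hx]
    · set S := Finset.univ.filter (fun x : X => a x ≠ 0) with hS
      have hSne : S.Nonempty := Finset.nonempty_iff_ne_empty.2 hSe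
      set m := S.inf' hSne a with hm
      have hmpos : 0 < m := by
        rw [hm]
        apply (Finset.lt_inf'_iff hSne).2
        intro x hx
        have : a x ≠ 0 := (Finset.mem_filter.1 hx).2
        exact lt_of_le_of_ne (ha x) (Ne.symm this)
      have hmle : ∀ x ∈ S, m ≤ a x := fun x hx => Finset.inf'_le a hx
      set a' := fun x => if x ∈ S then a x - m else 0 with ha'
      have ha'0 : ∀ x, 0 ≤ a' x := by
        intro x; rw [ha']; dsimp only; split
        · linarith [hmle x (by assumption)]
        · exact le_refl 0
      obtain ⟨x₀, hx₀S, hx₀⟩ := Finset.exists_mem_eq_inf' hSne a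
      have hsub : (Finset.univ.filter (fun x : X => a' x ≠ 0)) ⊆ S.erase x₀ := by
        intro x hx
        rw [Finset.mem_filter] at hx
        have hxS : x ∈ S := by
          by_contra h
          exact hx.2 (by simp [ha', h])
        refine Finset.mem_erase.2 ⟨?_, hxS⟩
        rintro rfl
        exact hx.2 (by simp [ha', hxS, hm, hx₀])
      have hcard : (Finset.univ.filter (fun x : X => a' x ≠ 0)).card < n := by
        calc (Finset.univ.filter (fun x : X => a' x ≠ 0)).card
            ≤ (S.erase x₀).card := Finset.card_le_card hsub
          _ < S.card := Finset.card_erase_lt_of_mem hx₀S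
          _ = n := hn
      obtain ⟨w', hw'0, hw'supp, hw'chain, hw'sum⟩ := ih _ hcard a' ha'0 rfl
      have hw'S : ∀ A, w' A ≠ 0 → A ⊆ S := by
        intro A hA x hxA
        have := hw'supp A hA x hxA
        exact Finset.mem_of_mem_erase (hsub (Finset.mem_filter.2 ⟨Finset.mem_univ x, this⟩))
      refine ⟨fun A => (if A = S then m else 0) + w' A, ?_, ?_, ?_, ?_⟩
      · intro A
        have h0 : 0 ≤ (if A = S then m else 0) := by split <;> [linarith; rfl]
        dsimp only
        linarith [hw'0 A]
      · intro A hA x hxA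
        by_cases hAS : A = S
        · subst hAS
          exact (Finset.mem_filter.1 hxA).2
        · have hA' : w' A ≠ 0 := by simpa [hAS] using hA
          intro hax
          exact absurd ((Finset.mem_filter.1 (hw'S A hA' hxA)).2) (fun h => h hax)
      · intro A B hA hB
        by_cases hAS : A = S <;> by_cases hBS : B = S
        · subst hAS; subst hBS; exact Or.inl subset_rfl
        · have hB' : w' B ≠ 0 := by simpa [hBS] using hB
          subst hAS; exact Or.inr (hw'S B hB')
        · have hA' : w' A ≠ 0 := by simpa [hAS] using hA
          subst hBS; exact Or.inl (hw'S A hA')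
        · exact hw'chain A B (by simpa [hAS] using hA) (by simpa [hBS] using hB)
      · intro x
        have : ∑ A : Finset X, ((if A = S then m else 0) + w' A) * (if x ∈ A then 1 else 0)
            = (∑ A : Finset X, (if A = S then m else 0) * (if x ∈ A then 1 else 0))
              + ∑ A : Finset X, w' A * (if x ∈ A then 1 else 0) := by
          rw [← Finset.sum_add_distrib]
          exact Finset.sum_congr rfl (fun A _ => by ring)
        rw [this, hw'sum x]
        have h1 : ∑ A : Finset X, (if A = S then m else 0) * (if x ∈ A then 1 else 0)
            = m * (if x ∈ S then 1 else 0) := by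
          rw [Finset.sum_eq_single S]
          · simp
          · intro A _ hAS; simp [hAS]
          · intro h; exact absurd (Finset.mem_univ S) h
        rw [h1]
        by_cases hxS : x ∈ S
        · simp only [ha', if_pos hxS]; ring
        · have hax : a x = 0 := by
            by_contra h
            exact hxS (Finset.mem_filter.2 ⟨Finset.mem_univ x, h⟩)
          simp [ha', hxS, hax]

/-- A finite nonempty chain of finsets has a maximum element. -/
lemma chain_exists_max {X : Type} (F : Finset (Finset X)) (hne : F.Nonempty)
    (hchain : ∀ A ∈ F, ∀ B ∈ F, A ⊆ B ∨ B ⊆ A) : ∃ A₀ ∈ F, ∀ A ∈ F, A ⊆ A₀ := by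
  classical
  obtain ⟨A₀, hA₀, hmax⟩ := F.exists_maximal hne
  refine ⟨A₀, hA₀, fun A hA => ?_⟩
  rcases hchain A hA A₀ hA₀ with h | h
  · exact h
  · by_contra hno
    have hne' : A₀ ≠ A := by rintro rfl; exact hno subset_rfl
    exact hno (hmax hA h)

section CI
variable {𝒳 𝒴 𝒬 : Type} [Fintype 𝒳] [Fintype 𝒴] [Fintype 𝒬] (μ : 𝒳 × 𝒴 × 𝒬 → ℝ)

noncomputable def mXQ (x : 𝒳) (q : 𝒬) : ℝ := ∑ y, μ (x, y, q)
noncomputable def mYQ (y : 𝒴) (q : 𝒬) : ℝ := ∑ x, μ (x, y, q)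
noncomputable def mQ (q : 𝒬) : ℝ := ∑ x, ∑ y, μ (x, y, q)

lemma prob_XQ (x : 𝒳) (q : 𝒬) :
    prob μ (fun w : 𝒳 × 𝒴 × 𝒬 => (w.1, w.2.2)) (x, q) = mXQ μ x q := by
  simp [prob, pe, mXQ, Fintype.sum_prod_type, Prod.ext_iff, ite_and,
    Finset.sum_ite_eq', Finset.sum_ite_eq]

lemma prob_YQ (y : 𝒴) (q : 𝒬) :
    prob μ (fun w : 𝒳 × 𝒴 × 𝒬 => (w.2.1, w.2.2)) (y, q) = mYQ μ y q := by
  simp [prob, pe, mYQ, Fintype.sum_prod_type, Prod.ext_iff, ite_and,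
    Finset.sum_ite_eq', Finset.sum_ite_eq]

lemma prob_Q (q : 𝒬) :
    prob μ (fun w : 𝒳 × 𝒴 × 𝒬 => w.2.2) q = mQ μ q := by
  simp [prob, pe, mQ, Fintype.sum_prod_type, ite_and, Finset.sum_ite_eq',
    Finset.sum_ite_eq]

lemma prob_XYQ (w : 𝒳 × 𝒴 × 𝒬) :
    prob μ (fun w : 𝒳 × 𝒴 × 𝒬 => (w.1, w.2.1, w.2.2)) w = μ w := by
  obtain ⟨x, y, q⟩ := w
  simp [prob, pe, Fintype.sum_prod_type, Prod.ext_iff, ite_and,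
    Finset.sum_ite_eq', Finset.sum_ite_eq]

lemma ci_of_condMutInfo_zero (hμ : IsPMF μ)
    (hci : condMutInfo μ (fun w => w.1) (fun w => w.2.1) (fun w => w.2.2) = 0) :
    ∀ x y q, μ (x, y, q) * mQ μ q = mXQ μ x q * mYQ μ y q := by
  classical
  obtain ⟨hμ0, hμ1⟩ := hμ
  have hXQ0 : ∀ x q, 0 ≤ mXQ μ x q := fun x q =>
    Finset.sum_nonneg fun y _ => hμ0 _
  have hYQ0 : ∀ y q, 0 ≤ mYQ μ y q := fun y q =>
    Finset.sum_nonneg fun x _ => hμ0 _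
  have hQ0 : ∀ q, 0 ≤ mQ μ q := fun q =>
    Finset.sum_nonneg fun x _ => Finset.sum_nonneg fun y _ => hμ0 _
  have hgeXQ : ∀ w : 𝒳 × 𝒴 × 𝒬, μ w ≤ mXQ μ w.1 w.2.2 := by
    rintro ⟨x, y, q⟩
    exact Finset.single_le_sum (fun y' _ => hμ0 (x, y', q)) (Finset.mem_univ y)
  have hgeYQ : ∀ w : 𝒳 × 𝒴 × 𝒬, μ w ≤ mYQ μ w.2.1 w.2.2 := by
    rintro ⟨x, y, q⟩
    exact Finset.single_le_sum (fun x' _ => hμ0 (x', y, q)) (Finset.mem_univ x)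
  have hgeQ : ∀ w : 𝒳 × 𝒴 × 𝒬, μ w ≤ mQ μ w.2.2 := by
    rintro ⟨x, y, q⟩
    calc μ (x, y, q) ≤ mXQ μ x q := hgeXQ (x, y, q)
      _ ≤ mQ μ q := Finset.single_le_sum (fun x' _ => hXQ0 x' q) (Finset.mem_univ x)
  -- sums over the triple product, q-outermost
  have hsum3 : ∀ f : 𝒳 × 𝒴 × 𝒬 → ℝ, ∑ w, f w = ∑ q, ∑ x, ∑ y, f (x, y, q) := by
    intro f
    rw [Fintype.sum_prod_type]
    have : ∀ x : 𝒳, ∑ p : 𝒴 × 𝒬, f (x, p) = ∑ q, ∑ y, f (x, y, q) := by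
      intro x; rw [Fintype.sum_prod_type]; exact Finset.sum_comm
    rw [Finset.sum_congr rfl (fun x _ => this x)]
    exact Finset.sum_comm
  have hmargX : ∀ q, ∑ x, mXQ μ x q = mQ μ q := fun q => rfl
  have hmargY : ∀ q, ∑ y, mYQ μ y q = mQ μ q := by
    intro q; unfold mYQ mQ; exact Finset.sum_comm
  have hQ1 : ∑ q, mQ μ q = 1 := by
    rw [← hμ1, hsum3 μ]; rfl
  -- rewrite the four entropies
  have hH1 : H μ (fun w : 𝒳 × 𝒴 × 𝒬 => (w.1, w.2.2))
      = -∑ w, μ w * Real.logb 2 (mXQ μ w.1 w.2.2) := by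
    rw [H_eq_sum]
    congr 1
    exact Finset.sum_congr rfl fun w _ => by rw [prob_XQ]
  have hH2 : H μ (fun w : 𝒳 × 𝒴 × 𝒬 => (w.2.1, w.2.2))
      = -∑ w, μ w * Real.logb 2 (mYQ μ w.2.1 w.2.2) := by
    rw [H_eq_sum]
    congr 1
    exact Finset.sum_congr rfl fun w _ => by rw [prob_YQ]
  have hH3 : H μ (fun w : 𝒳 × 𝒴 × 𝒬 => (w.1, w.2.1, w.2.2))
      = -∑ w, μ w * Real.logb 2 (μ w) := by
    rw [H_eq_sum]
    congr 1
    exact Finset.sum_congr rfl fun w _ => by rw [prob_XYQ]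
  have hH4 : H μ (fun w : 𝒳 × 𝒴 × 𝒬 => w.2.2)
      = -∑ w, μ w * Real.logb 2 (mQ μ w.2.2) := by
    rw [H_eq_sum]
    congr 1
    exact Finset.sum_congr rfl fun w _ => by rw [prob_Q]
  have hlogb : ∑ w, μ w * (Real.logb 2 (μ w) + Real.logb 2 (mQ μ w.2.2)
      - Real.logb 2 (mXQ μ w.1 w.2.2) - Real.logb 2 (mYQ μ w.2.1 w.2.2)) = 0 := by
    rw [condMutInfo, hH1, hH2, hH3, hH4] at hci
    have expand : ∑ w, μ w * (Real.logb 2 (μ w) + Real.logb 2 (mQ μ w.2.2)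
        - Real.logb 2 (mXQ μ w.1 w.2.2) - Real.logb 2 (mYQ μ w.2.1 w.2.2))
        = (∑ w, μ w * Real.logb 2 (μ w)) + (∑ w, μ w * Real.logb 2 (mQ μ w.2.2))
          - (∑ w, μ w * Real.logb 2 (mXQ μ w.1 w.2.2))
          - (∑ w, μ w * Real.logb 2 (mYQ μ w.2.1 w.2.2)) := by
      calc ∑ w, μ w * (Real.logb 2 (μ w) + Real.logb 2 (mQ μ w.2.2)
          - Real.logb 2 (mXQ μ w.1 w.2.2) - Real.logb 2 (mYQ μ w.2.1 w.2.2))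
          = ∑ w, ((μ w * Real.logb 2 (μ w) + μ w * Real.logb 2 (mQ μ w.2.2)
            - μ w * Real.logb 2 (mXQ μ w.1 w.2.2)) - μ w * Real.logb 2 (mYQ μ w.2.1 w.2.2)) :=
          Finset.sum_congr rfl fun w _ => by ring
        _ = (∑ w, (μ w * Real.logb 2 (μ w) + μ w * Real.logb 2 (mQ μ w.2.2)
            - μ w * Real.logb 2 (mXQ μ w.1 w.2.2)))
            - ∑ w, μ w * Real.logb 2 (mYQ μ w.2.1 w.2.2) := Finset.sum_sub_distrib _ _
        _ = (∑ w, (μ w * Real.logb 2 (μ w) + μ w * Real.logb 2 (mQ μ w.2.2)))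
            - (∑ w, μ w * Real.logb 2 (mXQ μ w.1 w.2.2))
            - ∑ w, μ w * Real.logb 2 (mYQ μ w.2.1 w.2.2) := by rw [Finset.sum_sub_distrib]
        _ = _ := by rw [Finset.sum_add_distrib]
    rw [expand]
    linarith
  have hlog : ∑ w, μ w * (Real.log (μ w) + Real.log (mQ μ w.2.2)
      - Real.log (mXQ μ w.1 w.2.2) - Real.log (mYQ μ w.2.1 w.2.2)) = 0 := by
    have : ∑ w, μ w * (Real.log (μ w) + Real.log (mQ μ w.2.2)
        - Real.log (mXQ μ w.1 w.2.2) - Real.log (mYQ μ w.2.1 w.2.2))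
        = Real.log 2 * ∑ w, μ w * (Real.logb 2 (μ w) + Real.logb 2 (mQ μ w.2.2)
          - Real.logb 2 (mXQ μ w.1 w.2.2) - Real.logb 2 (mYQ μ w.2.1 w.2.2)) := by
      rw [Finset.mul_sum]
      apply Finset.sum_congr rfl
      intro w _
      have h2 : Real.log 2 ≠ 0 := ne_of_gt (Real.log_pos (by norm_num))
      simp only [Real.logb]
      field_simp
    rw [this, hlogb, mul_zero]
  set u : 𝒳 × 𝒴 × 𝒬 → ℝ := fun w =>
    mXQ μ w.1 w.2.2 * mYQ μ w.2.1 w.2.2 / (μ w * mQ μ w.2.2) with hu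
  have hupos : ∀ w, μ w ≠ 0 → 0 < u w := by
    intro w hw
    have hμw : 0 < μ w := lt_of_le_of_ne (hμ0 w) (Ne.symm hw)
    have h1 : 0 < mXQ μ w.1 w.2.2 := lt_of_lt_of_le hμw (hgeXQ w)
    have h2 : 0 < mYQ μ w.2.1 w.2.2 := lt_of_lt_of_le hμw (hgeYQ w)
    have h3 : 0 < mQ μ w.2.2 := lt_of_lt_of_le hμw (hgeQ w)
    rw [hu]
    positivity
  have hterm : ∀ w, 0 ≤ μ w * (u w - 1 - Real.log (u w)) := by
    intro w
    by_cases hw : μ w = 0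
    · simp [hw]
    · have := Real.log_le_sub_one_of_pos (hupos w hw)
      have hμw : 0 < μ w := lt_of_le_of_ne (hμ0 w) (Ne.symm hw)
      nlinarith
  have hlogu : ∑ w, μ w * Real.log (u w) = 0 := by
    rw [← neg_eq_zero, ← hlog, ← Finset.sum_neg_distrib]
    apply Finset.sum_congr rfl
    intro w _
    by_cases hw : μ w = 0
    · simp [hw]
    · have hμw : 0 < μ w := lt_of_le_of_ne (hμ0 w) (Ne.symm hw)
      have h1 : 0 < mXQ μ w.1 w.2.2 := lt_of_lt_of_le hμw (hgeXQ w)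
      have h2 : 0 < mYQ μ w.2.1 w.2.2 := lt_of_lt_of_le hμw (hgeYQ w)
      have h3 : 0 < mQ μ w.2.2 := lt_of_lt_of_le hμw (hgeQ w)
      rw [hu]
      rw [Real.log_div (by positivity) (by positivity), Real.log_mul (ne_of_gt h1) (ne_of_gt h2),
        Real.log_mul (ne_of_gt hμw) (ne_of_gt h3)]
      ring
  have hμu : ∑ w, μ w * u w ≤ 1 := by
    have hle : ∑ w, μ w * u w ≤ ∑ w : 𝒳 × 𝒴 × 𝒬, (if mQ μ w.2.2 = 0 then 0 else
        mXQ μ w.1 w.2.2 * mYQ μ w.2.1 w.2.2 / mQ μ w.2.2) := by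
      apply Finset.sum_le_sum
      intro w _
      by_cases hw : μ w = 0
      · rw [hw, zero_mul]
        split
        · exact le_refl 0
        · exact div_nonneg (mul_nonneg (hXQ0 _ _) (hYQ0 _ _)) (hQ0 _)
      · have hμw : 0 < μ w := lt_of_le_of_ne (hμ0 w) (Ne.symm hw)
        have h3 : 0 < mQ μ w.2.2 := lt_of_lt_of_le hμw (hgeQ w)
        rw [if_neg (ne_of_gt h3), hu]
        rw [show μ w * (mXQ μ w.1 w.2.2 * mYQ μ w.2.1 w.2.2 / (μ w * mQ μ w.2.2))
            = mXQ μ w.1 w.2.2 * mYQ μ w.2.1 w.2.2 / mQ μ w.2.2 by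
          field_simp]
    refine hle.trans ?_
    rw [hsum3]
    have : ∀ q : 𝒬, (∑ x, ∑ y, (if mQ μ q = 0 then 0 else
        mXQ μ x q * mYQ μ y q / mQ μ q)) = (if mQ μ q = 0 then 0 else mQ μ q) := by
      intro q
      by_cases hq : mQ μ q = 0
      · simp [hq]
      · simp only [if_neg hq]
        have : ∀ x : 𝒳, ∑ y, mXQ μ x q * mYQ μ y q / mQ μ q
            = mXQ μ x q * mQ μ q / mQ μ q := by
          intro x
          rw [← hmargY q, Finset.mul_sum, Finset.sum_div]
        rw [Finset.sum_congr rfl fun x _ => this x]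
        rw [← Finset.sum_div, ← Finset.sum_mul, hmargX q]
        field_simp
    rw [Finset.sum_congr rfl fun q _ => this q]
    rw [← hQ1]
    apply Finset.sum_le_sum
    intro q _
    split
    · exact hQ0 q
    · exact le_refl _
  -- total of nonnegative terms is ≤ 0, hence every term vanishes
  have htotal : ∑ w, μ w * (u w - 1 - Real.log (u w)) = 0 := by
    have hle : ∑ w, μ w * (u w - 1 - Real.log (u w)) ≤ 0 := by
      have hexp : ∑ w, μ w * (u w - 1 - Real.log (u w))
          = (∑ w, μ w * u w) - (∑ w, μ w) - ∑ w, μ w * Real.log (u w) := by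
        rw [← Finset.sum_sub_distrib, ← Finset.sum_sub_distrib]
        exact Finset.sum_congr rfl fun w _ => by ring
      rw [hexp, hμ1, hlogu]
      linarith
    exact le_antisymm hle (Finset.sum_nonneg fun w _ => hterm w)
  have hzero : ∀ w : 𝒳 × 𝒴 × 𝒬, μ w * (u w - 1 - Real.log (u w)) = 0 := by
    have := (Finset.sum_eq_zero_iff_of_nonneg (fun w _ => hterm w)).1 htotal
    exact fun w => this w (Finset.mem_univ w)
  have hkey : ∀ w : 𝒳 × 𝒴 × 𝒬, μ w ≠ 0 →
      mXQ μ w.1 w.2.2 * mYQ μ w.2.1 w.2.2 = μ w * mQ μ w.2.2 := by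
    intro w hw
    have hμw : 0 < μ w := lt_of_le_of_ne (hμ0 w) (Ne.symm hw)
    have h3 : 0 < mQ μ w.2.2 := lt_of_lt_of_le hμw (hgeQ w)
    have hu1 : u w = 1 := by
      by_contra hne
      have hlt := Real.log_lt_sub_one_of_pos (hupos w hw) hne
      have := hzero w
      have h0 : u w - 1 - Real.log (u w) = 0 := by
        rcases mul_eq_zero.1 this with h | h
        · exact absurd h hw
        · exact h
      linarith
    have := hu1
    rw [hu] at this
    field_simp at this
    linarith [this]
  -- conclude for all (x, y, q)
  intro x y q
  set D : 𝒳 × 𝒴 → ℝ := fun p =>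
    mXQ μ p.1 q * mYQ μ p.2 q - μ (p.1, p.2, q) * mQ μ q with hD
  have hD0 : ∀ p : 𝒳 × 𝒴, 0 ≤ D p := by
    intro p
    by_cases hw : μ (p.1, p.2, q) = 0
    · rw [hD]; dsimp only; rw [hw, zero_mul, sub_zero]
      exact mul_nonneg (hXQ0 _ _) (hYQ0 _ _)
    · rw [hD]; dsimp only
      rw [hkey (p.1, p.2, q) hw]
      simp
  have hDsum : ∑ p : 𝒳 × 𝒴, D p = 0 := by
    rw [hD]
    rw [Finset.sum_sub_distrib]
    have h1 : ∑ p : 𝒳 × 𝒴, mXQ μ p.1 q * mYQ μ p.2 q = mQ μ q * mQ μ q := by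
      rw [Fintype.sum_prod_type]
      have : ∀ x : 𝒳, ∑ y, mXQ μ x q * mYQ μ y q = mXQ μ x q * mQ μ q := by
        intro x; rw [← Finset.mul_sum, hmargY q]
      rw [Finset.sum_congr rfl fun x _ => this x, ← Finset.sum_mul, hmargX q]
    have h2 : ∑ p : 𝒳 × 𝒴, μ (p.1, p.2, q) * mQ μ q = mQ μ q * mQ μ q := by
      rw [Fintype.sum_prod_type]
      have : ∀ x : 𝒳, ∑ y, μ (x, y, q) * mQ μ q = mXQ μ x q * mQ μ q := by
        intro x; rw [← Finset.sum_mul]; rfl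
      rw [Finset.sum_congr rfl fun x _ => this x, ← Finset.sum_mul, hmargX q]
    rw [h1, h2, sub_self]
  have hDz : D (x, y) = 0 :=
    (Finset.sum_eq_zero_iff_of_nonneg (fun p _ => hD0 p)).1 hDsum (x, y) (Finset.mem_univ _)
  rw [hD] at hDz
  dsimp only at hDz
  linarith

end CI


/-- Claim 5.2: given independent `(X,Y)` and `Q` with
`I(X;Y|Q)=0`, there is a random variable `R` over rectangles, jointly
distributed with `(X,Y,Q)` (i.e. a joint pmf `ν` with marginal `μ`), such that
(1) given `Q=q,R=r` the conditional distribution of `(X,Y)` is `p_{XY}`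
conditioned on `(X,Y)∈r` (stated in cross-multiplied form), and (2) for every
`q`, the union of the small rectangles (`Pr[(X,Y)∈r] < α`) occurring with `q`
has probability at most `2√α`. -/
theorem exists_rectangle_decomposition {𝒳 𝒴 𝒬 : Type}
    [Fintype 𝒳] [Fintype 𝒴] [Fintype 𝒬]
    (μ : 𝒳 × 𝒴 × 𝒬 → ℝ) (hμ : IsPMF μ) (α : ℝ) (hα0 : 0 < α) (hα1 : α < 1)
    (hind : ∀ x y, pe μ (fun w => w.1 = x ∧ w.2.1 = y)
      = pe μ (fun w => w.1 = x) * pe μ (fun w => w.2.1 = y))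
    (hci : condMutInfo μ (fun w => w.1) (fun w => w.2.1) (fun w => w.2.2) = 0) :
    ∃ ν : 𝒳 × 𝒴 × 𝒬 × (Finset 𝒳 × Finset 𝒴) → ℝ, IsPMF ν ∧
      (∀ x y q, (∑ r, ν (x, y, q, r)) = μ (x, y, q)) ∧
      (∀ q r, 0 < pe ν (fun w => w.2.2.1 = q ∧ w.2.2.2 = r) → ∀ x y,
        ν (x, y, q, r) * pe μ (fun w => w.1 ∈ r.1 ∧ w.2.1 ∈ r.2)
          = pe ν (fun w => w.2.2.1 = q ∧ w.2.2.2 = r)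
            * pe μ (fun w => w.1 = x ∧ w.2.1 = y ∧ x ∈ r.1 ∧ y ∈ r.2)) ∧
      (∀ q, pe μ (fun w => ∃ r : Finset 𝒳 × Finset 𝒴,
          0 < pe ν (fun w' => w'.2.2.1 = q ∧ w'.2.2.2 = r) ∧
          pe μ (fun w' => w'.1 ∈ r.1 ∧ w'.2.1 ∈ r.2) < α ∧
          w.1 ∈ r.1 ∧ w.2.1 ∈ r.2)
        ≤ 2 * Real.sqrt α) := by
  classical
  have hμ0 := hμ.1
  have hμ1 := hμ.2
  have hci' := ci_of_condMutInfo_zero μ hμ hci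
  -- basic marginals and nonnegativity
  have hXQ0 : ∀ x q, 0 ≤ mXQ μ x q := fun x q => Finset.sum_nonneg fun y _ => hμ0 _
  have hYQ0 : ∀ y q, 0 ≤ mYQ μ y q := fun y q => Finset.sum_nonneg fun x _ => hμ0 _
  have hQ0 : ∀ q, 0 ≤ mQ μ q := fun q =>
    Finset.sum_nonneg fun x _ => Finset.sum_nonneg fun y _ => hμ0 _
  set pX : 𝒳 → ℝ := fun x => ∑ q, mXQ μ x q with hpX
  set pY : 𝒴 → ℝ := fun y => ∑ q, mYQ μ y q with hpY
  have hpX0 : ∀ x, 0 ≤ pX x := fun x => Finset.sum_nonneg fun q _ => hXQ0 x q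
  have hpY0 : ∀ y, 0 ≤ pY y := fun y => Finset.sum_nonneg fun q _ => hYQ0 y q
  have hXQle : ∀ x q, mXQ μ x q ≤ pX x := fun x q =>
    Finset.single_le_sum (fun q' _ => hXQ0 x q') (Finset.mem_univ q)
  have hYQle : ∀ y q, mYQ μ y q ≤ pY y := fun y q =>
    Finset.single_le_sum (fun q' _ => hYQ0 y q') (Finset.mem_univ q)
  have hXQleQ : ∀ x q, mXQ μ x q ≤ mQ μ q := fun x q =>
    Finset.single_le_sum (fun x' _ => hXQ0 x' q) (Finset.mem_univ x)
  have hmargY : ∀ q, ∑ y, mYQ μ y q = mQ μ q := by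
    intro q; unfold mYQ mQ; exact Finset.sum_comm
  have hYQleQ : ∀ y q, mYQ μ y q ≤ mQ μ q := by
    intro y q
    rw [← hmargY q]
    exact Finset.single_le_sum (fun y' _ => hYQ0 y' q) (Finset.mem_univ y)
  have hμleQ : ∀ x y q, μ (x, y, q) ≤ mQ μ q := by
    intro x y q
    calc μ (x, y, q) ≤ mXQ μ x q :=
        Finset.single_le_sum (fun y' _ => hμ0 (x, y', q)) (Finset.mem_univ y)
      _ ≤ mQ μ q := hXQleQ x q
  -- pe-marginal identifications
  have hpXalt : ∀ x, ∑ y, ∑ q, μ (x, y, q) = pX x := by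
    intro x; rw [hpX]; exact Finset.sum_comm
  have hpYalt : ∀ y, ∑ x, ∑ q, μ (x, y, q) = pY y := by
    intro y; rw [hpY]; exact Finset.sum_comm
  have E1 : ∀ x, pe μ (fun w => w.1 = x) = pX x := by
    intro x
    have : pe μ (fun w => w.1 = x) = ∑ y, ∑ q, μ (x, y, q) := by
      rw [pe, Fintype.sum_prod_type]
      calc ∑ x', ∑ p : 𝒴 × 𝒬, (if x' = x then μ (x', p) else 0)
          = ∑ x', (if x' = x then ∑ p : 𝒴 × 𝒬, μ (x', p) else 0) := by
            refine Finset.sum_congr rfl fun x' _ => ?_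
            split <;> simp
        _ = ∑ p : 𝒴 × 𝒬, μ (x, p) := by
            rw [Finset.sum_ite_eq' Finset.univ x fun x' => ∑ p : 𝒴 × 𝒬, μ (x', p)]
            simp
        _ = ∑ y, ∑ q, μ (x, y, q) := Fintype.sum_prod_type _
    rw [this, hpXalt]
  have E2 : ∀ y, pe μ (fun w => w.2.1 = y) = pY y := by
    intro y
    have : pe μ (fun w => w.2.1 = y) = ∑ x, ∑ q, μ (x, y, q) := by
      rw [pe, Fintype.sum_prod_type]
      refine Finset.sum_congr rfl fun x _ => ?_
      rw [Fintype.sum_prod_type]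
      calc ∑ y', ∑ q, (if y' = y then μ (x, y', q) else 0)
          = ∑ y', (if y' = y then ∑ q, μ (x, y', q) else 0) := by
            refine Finset.sum_congr rfl fun y' _ => ?_
            split <;> simp
        _ = ∑ q, μ (x, y, q) := by
            rw [Finset.sum_ite_eq' Finset.univ y fun y' => ∑ q, μ (x, y', q)]
            simp
    rw [this, hpYalt]
  have hXY : ∀ x y, ∑ q, μ (x, y, q) = pX x * pY y := by
    intro x y
    have h3 : pe μ (fun w => w.1 = x ∧ w.2.1 = y) = ∑ q, μ (x, y, q) := by
      rw [pe, Fintype.sum_prod_type]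
      rw [Finset.sum_eq_single x]
      · rw [Fintype.sum_prod_type, Finset.sum_eq_single y]
        · exact Finset.sum_congr rfl fun q _ => by simp
        · intro y' _ hy'
          exact Finset.sum_eq_zero fun q _ => by simp [hy']
        · intro h; exact absurd (Finset.mem_univ y) h
      · intro x' _ hx'
        exact Finset.sum_eq_zero fun p _ => by simp [hx']
      · intro h; exact absurd (Finset.mem_univ x) h
    rw [← h3, hind x y, E1, E2]
  -- the tilt factors
  set a : 𝒬 → 𝒳 → ℝ := fun q x => mXQ μ x q / (mQ μ q * pX x) with ha
  set b : 𝒬 → 𝒴 → ℝ := fun q y => mYQ μ y q / (mQ μ q * pY y) with hb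
  have ha0 : ∀ q x, 0 ≤ a q x := fun q x =>
    div_nonneg (hXQ0 x q) (mul_nonneg (hQ0 q) (hpX0 x))
  have hb0 : ∀ q y, 0 ≤ b q y := fun q y =>
    div_nonneg (hYQ0 y q) (mul_nonneg (hQ0 q) (hpY0 y))
  have K1 : ∀ q x, pX x * mQ μ q * a q x = mXQ μ x q := by
    intro q x
    by_cases h1 : pX x = 0
    · have h2 : mXQ μ x q = 0 := le_antisymm (h1 ▸ hXQle x q) (hXQ0 x q)
      rw [h1, h2]; ring
    by_cases h2 : mQ μ q = 0
    · have h3 : mXQ μ x q = 0 := le_antisymm (h2 ▸ hXQleQ x q) (hXQ0 x q)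
      rw [h2, h3]; ring
    rw [ha]
    field_simp
  have K2 : ∀ q y, pY y * mQ μ q * b q y = mYQ μ y q := by
    intro q y
    by_cases h1 : pY y = 0
    · have h2 : mYQ μ y q = 0 := le_antisymm (h1 ▸ hYQle y q) (hYQ0 y q)
      rw [h1, h2]; ring
    by_cases h2 : mQ μ q = 0
    · have h3 : mYQ μ y q = 0 := le_antisymm (h2 ▸ hYQleQ y q) (hYQ0 y q)
      rw [h2, h3]; ring
    rw [hb]
    field_simp
  clear_value pX pY a b
  clear hpX hpY ha hb
  -- layer decompositions
  choose wA hwA0 hwAsupp hwAchain hwAsum using fun q => layer_decomp (a q) (ha0 q)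
  choose wB hwB0 hwBsupp hwBchain hwBsum using fun q => layer_decomp (b q) (hb0 q)
  -- the joint distribution
  set ν : 𝒳 × 𝒴 × 𝒬 × (Finset 𝒳 × Finset 𝒴) → ℝ := fun z =>
    mQ μ z.2.2.1 * pX z.1 * pY z.2.1 * wA z.2.2.1 z.2.2.2.1 * wB z.2.2.1 z.2.2.2.2
      * (if z.1 ∈ z.2.2.2.1 then 1 else 0) * (if z.2.1 ∈ z.2.2.2.2 then 1 else 0) with hν
  have hνdef : ∀ (x : 𝒳) (y : 𝒴) (q : 𝒬) (r : Finset 𝒳 × Finset 𝒴),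
      ν (x, y, q, r) = mQ μ q * pX x * pY y * wA q r.1 * wB q r.2
        * (if x ∈ r.1 then 1 else 0) * (if y ∈ r.2 then 1 else 0) :=
    fun _ _ _ _ => rfl
  clear_value ν
  clear hν
  have hν0 : ∀ z : 𝒳 × 𝒴 × 𝒬 × (Finset 𝒳 × Finset 𝒴), 0 ≤ ν z := by
    rintro ⟨x, y, q, r⟩
    rw [hνdef]
    have i1 : (0:ℝ) ≤ if x ∈ r.1 then 1 else 0 := by split <;> norm_num
    have i2 : (0:ℝ) ≤ if y ∈ r.2 then 1 else 0 := by split <;> norm_num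
    have := hQ0 q
    have := hpX0 x
    have := hpY0 y
    have := hwA0 q r.1
    have := hwB0 q r.2
    positivity
  -- rectangle marginal probabilities
  set PA : Finset 𝒳 → ℝ := fun A => ∑ x, pX x * (if x ∈ A then 1 else 0) with hPA
  set PB : Finset 𝒴 → ℝ := fun B => ∑ y, pY y * (if y ∈ B then 1 else 0) with hPB
  have hPAdef : ∀ A, PA A = ∑ x, pX x * (if x ∈ A then 1 else 0) := fun _ => rfl
  have hPBdef : ∀ B, PB B = ∑ y, pY y * (if y ∈ B then 1 else 0) := fun _ => rfl
  clear_value PA PB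
  clear hPA hPB
  have hPA0 : ∀ A, 0 ≤ PA A := by
    intro A; rw [hPAdef]
    apply Finset.sum_nonneg
    intro x _
    have : (0:ℝ) ≤ if x ∈ A then 1 else 0 := by split <;> norm_num
    exact mul_nonneg (hpX0 x) this
  have hPB0 : ∀ B, 0 ≤ PB B := by
    intro B; rw [hPBdef]
    apply Finset.sum_nonneg
    intro y _
    have : (0:ℝ) ≤ if y ∈ B then 1 else 0 := by split <;> norm_num
    exact mul_nonneg (hpY0 y) this
  -- marginal over rectangles
  have hmarg : ∀ x y q, ∑ r : Finset 𝒳 × Finset 𝒴, ν (x, y, q, r) = μ (x, y, q) := by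
    intro x y q
    have hfac : ∑ r : Finset 𝒳 × Finset 𝒴, ν (x, y, q, r)
        = mQ μ q * pX x * pY y * a q x * b q y := by
      calc ∑ r : Finset 𝒳 × Finset 𝒴, ν (x, y, q, r)
          = ∑ A : Finset 𝒳, ∑ B : Finset 𝒴, (mQ μ q * pX x * pY y)
              * ((wA q A * (if x ∈ A then 1 else 0)) * (wB q B * (if y ∈ B then 1 else 0))) := by
            rw [Fintype.sum_prod_type]
            exact Finset.sum_congr rfl fun A _ => Finset.sum_congr rfl fun B _ => by
              rw [hνdef]; ring
        _ = ∑ A : Finset 𝒳, ((mQ μ q * pX x * pY y) * (wA q A * (if x ∈ A then 1 else 0)))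
              * ∑ B : Finset 𝒴, wB q B * (if y ∈ B then 1 else 0) := by
            refine Finset.sum_congr rfl fun A _ => ?_
            rw [Finset.mul_sum]
            exact Finset.sum_congr rfl fun B _ => by ring
        _ = ∑ A : Finset 𝒳, ((mQ μ q * pX x * pY y * b q y) * (wA q A * (if x ∈ A then 1 else 0))) := by
            refine Finset.sum_congr rfl fun A _ => ?_
            rw [hwBsum q y]; ring
        _ = (mQ μ q * pX x * pY y * b q y) * ∑ A : Finset 𝒳, wA q A * (if x ∈ A then 1 else 0) := by
            rw [Finset.mul_sum]
        _ = mQ μ q * pX x * pY y * a q x * b q y := by rw [hwAsum q x]; ring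
    rw [hfac]
    by_cases hq : mQ μ q = 0
    · have hμz : μ (x, y, q) = 0 := le_antisymm (hq ▸ hμleQ x y q) (hμ0 _)
      rw [hq, hμz]; ring
    · have h := hci' x y q
      rw [← K1 q x, ← K2 q y] at h
      apply mul_right_cancel₀ hq
      linear_combination -h
  -- expanding sums over the 4-fold product
  have hexp4 : ∀ f : 𝒳 × 𝒴 × 𝒬 × (Finset 𝒳 × Finset 𝒴) → ℝ,
      ∑ z, f z = ∑ x, ∑ y, ∑ q, ∑ r : Finset 𝒳 × Finset 𝒴, f (x, y, q, r) := by
    intro f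
    rw [Fintype.sum_prod_type]
    refine Finset.sum_congr rfl fun x _ => ?_
    rw [Fintype.sum_prod_type]
    refine Finset.sum_congr rfl fun y _ => ?_
    rw [Fintype.sum_prod_type]
  have hνPMF : IsPMF ν := by
    constructor
    · exact hν0
    · rw [hexp4 ν]
      rw [Finset.sum_congr rfl fun x _ => Finset.sum_congr rfl fun y _ =>
        Finset.sum_congr rfl fun q _ => hmarg x y q]
      rw [← hμ1]
      rw [Fintype.sum_prod_type]
      exact Finset.sum_congr rfl fun x _ =>
        (Fintype.sum_prod_type (fun p : 𝒴 × 𝒬 => μ (x, p))).symm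
  have peRect : ∀ A B, pe μ (fun w => w.1 ∈ A ∧ w.2.1 ∈ B) = PA A * PB B := by
    intro A B
    have step : pe μ (fun w => w.1 ∈ A ∧ w.2.1 ∈ B)
        = ∑ x, ∑ y, (pX x * (if x ∈ A then 1 else 0)) * (pY y * (if y ∈ B then 1 else 0)) := by
      rw [pe, Fintype.sum_prod_type]
      refine Finset.sum_congr rfl fun x _ => ?_
      rw [Fintype.sum_prod_type]
      refine Finset.sum_congr rfl fun y _ => ?_
      by_cases hx : x ∈ A <;> by_cases hy : y ∈ B <;>
        simp [hx, hy, hXY x y]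
    rw [step, hPAdef, hPBdef, Finset.sum_mul_sum]
  have peQR : ∀ q r, pe ν (fun w => w.2.2.1 = q ∧ w.2.2.2 = r)
      = mQ μ q * wA q r.1 * wB q r.2 * PA r.1 * PB r.2 := by
    intro q r
    have step1 : pe ν (fun w => w.2.2.1 = q ∧ w.2.2.2 = r) = ∑ x, ∑ y, ν (x, y, q, r) := by
      rw [pe, hexp4]
      refine Finset.sum_congr rfl fun x _ => Finset.sum_congr rfl fun y _ => ?_
      rw [Finset.sum_eq_single q]
      · rw [Finset.sum_eq_single r]
        · simp
        · intro r' _ hr'; simp [hr']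
        · intro h; exact absurd (Finset.mem_univ r) h
      · intro q' _ hq'
        exact Finset.sum_eq_zero fun r' _ => by simp [hq']
      · intro h; exact absurd (Finset.mem_univ q) h
    rw [step1]
    calc ∑ x, ∑ y, ν (x, y, q, r)
        = ∑ x, ((mQ μ q * wA q r.1 * wB q r.2) * (pX x * (if x ∈ r.1 then 1 else 0)))
            * ∑ y, pY y * (if y ∈ r.2 then 1 else 0) := by
          refine Finset.sum_congr rfl fun x _ => ?_
          rw [Finset.mul_sum]
          exact Finset.sum_congr rfl fun y _ => by rw [hνdef]; ring
      _ = ∑ x, ((mQ μ q * wA q r.1 * wB q r.2 * PB r.2) * (pX x * (if x ∈ r.1 then 1 else 0))) := by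
          refine Finset.sum_congr rfl fun x _ => ?_
          rw [← hPBdef]; ring
      _ = (mQ μ q * wA q r.1 * wB q r.2 * PB r.2) * ∑ x, pX x * (if x ∈ r.1 then 1 else 0) := by
          rw [Finset.mul_sum]
      _ = mQ μ q * wA q r.1 * wB q r.2 * PA r.1 * PB r.2 := by
          rw [← hPAdef]; ring
  have peXYRect : ∀ (x : 𝒳) (y : 𝒴) (r : Finset 𝒳 × Finset 𝒴),
      pe μ (fun w => w.1 = x ∧ w.2.1 = y ∧ x ∈ r.1 ∧ y ∈ r.2)
        = pX x * pY y * (if x ∈ r.1 then 1 else 0) * (if y ∈ r.2 then 1 else 0) := by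
    intro x y r
    by_cases hx : x ∈ r.1
    · by_cases hy : y ∈ r.2
      · have hE : (fun w : 𝒳 × 𝒴 × 𝒬 => w.1 = x ∧ w.2.1 = y ∧ x ∈ r.1 ∧ y ∈ r.2)
            = fun w => w.1 = x ∧ w.2.1 = y := by
          funext w; simp [hx, hy]
        rw [hE, hind x y, E1, E2, if_pos hx, if_pos hy]
        ring
      · rw [pe_eq_zero_of_none μ (fun w h => hy h.2.2.2), if_neg hy]
        ring
    · rw [pe_eq_zero_of_none μ (fun w h => hx h.2.2.1), if_neg hx]
      ring
  have peMemX : ∀ A : Finset 𝒳, pe μ (fun w => w.1 ∈ A) = PA A := by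
    intro A
    rw [pe, Fintype.sum_prod_type, hPAdef]
    refine Finset.sum_congr rfl fun x _ => ?_
    by_cases hx : x ∈ A
    · simp only [hx, if_true, mul_one]
      exact (Fintype.sum_prod_type (fun p : 𝒴 × 𝒬 => μ (x, p))).trans (hpXalt x)
    · simp [hx]
  have peMemY : ∀ B : Finset 𝒴, pe μ (fun w => w.2.1 ∈ B) = PB B := by
    intro B
    rw [pe, hPBdef, Fintype.sum_prod_type]
    refine Eq.trans (Finset.sum_congr rfl fun x _ => Fintype.sum_prod_type _) ?_
    rw [Finset.sum_comm]
    refine Finset.sum_congr rfl fun y _ => ?_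
    by_cases hy : y ∈ B
    · simp only [hy, if_true, mul_one]
      exact hpYalt y
    · simp [hy]
  -- positivity splitting helper
  have mul_pos_split : ∀ x' y' : ℝ, 0 ≤ x' → 0 ≤ y' → 0 < x' * y' → 0 < x' ∧ 0 < y' := by
    intro x' y' hx hy h
    constructor
    · rcases hx.lt_or_eq with h' | h'
      · exact h'
      · rw [← h', zero_mul] at h; exact absurd h (lt_irrefl 0)
    · rcases hy.lt_or_eq with h' | h'
      · exact h'
      · rw [← h', mul_zero] at h; exact absurd h (lt_irrefl 0)
  refine ⟨ν, hνPMF, hmarg, ?_, ?_⟩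
  · -- conditional distribution property
    intro q r hpos x y
    rw [peQR, peRect, peXYRect, hνdef]
    ring
  · -- small rectangles union bound
    intro q
    have hsqrt0 : 0 < Real.sqrt α := Real.sqrt_pos.2 hα0
    set F : Finset (Finset 𝒳) :=
      Finset.univ.filter (fun A => wA q A ≠ 0 ∧ PA A < Real.sqrt α) with hF
    set G : Finset (Finset 𝒴) :=
      Finset.univ.filter (fun B => wB q B ≠ 0 ∧ PB B < Real.sqrt α) with hG
    set SA : Finset 𝒳 := F.sup id with hSA
    set SB : Finset 𝒴 := G.sup id with hSB
    have hPAmono : ∀ A A' : Finset 𝒳, A ⊆ A' → PA A ≤ PA A' := by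
      intro A A' hsub
      rw [hPAdef, hPAdef]
      apply Finset.sum_le_sum
      intro x _
      by_cases hx : x ∈ A
      · simp [hx, hsub hx]
      · have : (0:ℝ) ≤ if x ∈ A' then 1 else 0 := by split <;> norm_num
        simp only [hx, if_false, mul_zero]
        exact mul_nonneg (hpX0 x) this
    have hPBmono : ∀ B B' : Finset 𝒴, B ⊆ B' → PB B ≤ PB B' := by
      intro B B' hsub
      rw [hPBdef, hPBdef]
      apply Finset.sum_le_sum
      intro y _
      by_cases hy : y ∈ B
      · simp [hy, hsub hy]
      · have : (0:ℝ) ≤ if y ∈ B' then 1 else 0 := by split <;> norm_num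
        simp only [hy, if_false, mul_zero]
        exact mul_nonneg (hpY0 y) this
    have hPASA : PA SA ≤ Real.sqrt α := by
      by_cases hFne : F.Nonempty
      · obtain ⟨A₀, hA₀F, hmax⟩ := chain_exists_max F hFne (by
          intro A hA B hB
          exact hwAchain q A B ((Finset.mem_filter.1 hA).2.1) ((Finset.mem_filter.1 hB).2.1))
        have hsub : SA ⊆ A₀ := Finset.sup_le fun A hA => hmax A hA
        calc PA SA ≤ PA A₀ := hPAmono _ _ hsub
          _ ≤ Real.sqrt α := le_of_lt (Finset.mem_filter.1 hA₀F).2.2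
      · rw [Finset.not_nonempty_iff_eq_empty] at hFne
        rw [hSA, hFne, Finset.sup_empty]
        have hz : PA (⊥ : Finset 𝒳) = 0 := by
          rw [hPAdef]
          apply Finset.sum_eq_zero
          intro x _
          simp
        rw [hz]
        exact le_of_lt hsqrt0
    have hPBSB : PB SB ≤ Real.sqrt α := by
      by_cases hGne : G.Nonempty
      · obtain ⟨B₀, hB₀G, hmax⟩ := chain_exists_max G hGne (by
          intro A hA B hB
          exact hwBchain q A B ((Finset.mem_filter.1 hA).2.1) ((Finset.mem_filter.1 hB).2.1))
        have hsub : SB ⊆ B₀ := Finset.sup_le fun B hB => hmax B hB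
        calc PB SB ≤ PB B₀ := hPBmono _ _ hsub
          _ ≤ Real.sqrt α := le_of_lt (Finset.mem_filter.1 hB₀G).2.2
      · rw [Finset.not_nonempty_iff_eq_empty] at hGne
        rw [hSB, hGne, Finset.sup_empty]
        have hz : PB (⊥ : Finset 𝒴) = 0 := by
          rw [hPBdef]
          apply Finset.sum_eq_zero
          intro y _
          simp
        rw [hz]
        exact le_of_lt hsqrt0
    have himp : ∀ w : 𝒳 × 𝒴 × 𝒬, (∃ r : Finset 𝒳 × Finset 𝒴,
        0 < pe ν (fun w' => w'.2.2.1 = q ∧ w'.2.2.2 = r) ∧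
        pe μ (fun w' => w'.1 ∈ r.1 ∧ w'.2.1 ∈ r.2) < α ∧
        w.1 ∈ r.1 ∧ w.2.1 ∈ r.2) → (w.1 ∈ SA ∨ w.2.1 ∈ SB) := by
      rintro w ⟨r, hpos, hsmall, hx, hy⟩
      rw [peQR] at hpos
      rw [peRect] at hsmall
      have s1 := mul_pos_split _ _
        (mul_nonneg (mul_nonneg (mul_nonneg (hQ0 q) (hwA0 q r.1)) (hwB0 q r.2)) (hPA0 r.1))
        (hPB0 r.2) hpos
      have s2 := mul_pos_split _ _
        (mul_nonneg (mul_nonneg (hQ0 q) (hwA0 q r.1)) (hwB0 q r.2)) (hPA0 r.1) s1.1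
      have s3 := mul_pos_split _ _ (mul_nonneg (hQ0 q) (hwA0 q r.1)) (hwB0 q r.2) s2.1
      have s4 := mul_pos_split _ _ (hQ0 q) (hwA0 q r.1) s3.1
      have hwApos : wA q r.1 ≠ 0 := ne_of_gt s4.2
      have hwBpos : wB q r.2 ≠ 0 := ne_of_gt s3.2
      have hPApos : 0 < PA r.1 := s2.2
      have hPBpos : 0 < PB r.2 := s1.2
      by_cases hsm : PA r.1 < Real.sqrt α
      · left
        have hmem : r.1 ∈ F := by
          rw [hF]; exact Finset.mem_filter.2 ⟨Finset.mem_univ _, hwApos, hsm⟩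
        exact (Finset.le_sup (f := id) hmem : r.1 ⊆ SA) hx
      · right
        push_neg at hsm
        have hPBlt : PB r.2 < Real.sqrt α := by
          have h1 : Real.sqrt α * PB r.2 ≤ PA r.1 * PB r.2 :=
            mul_le_mul_of_nonneg_right hsm (le_of_lt hPBpos)
          have h2 : Real.sqrt α * Real.sqrt α = α := Real.mul_self_sqrt (le_of_lt hα0)
          nlinarith
        have hmem : r.2 ∈ G := by
          rw [hG]; exact Finset.mem_filter.2 ⟨Finset.mem_univ _, hwBpos, hPBlt⟩
        exact (Finset.le_sup (f := id) hmem : r.2 ⊆ SB) hy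
    calc pe μ (fun w => ∃ r : Finset 𝒳 × Finset 𝒴,
          0 < pe ν (fun w' => w'.2.2.1 = q ∧ w'.2.2.2 = r) ∧
          pe μ (fun w' => w'.1 ∈ r.1 ∧ w'.2.1 ∈ r.2) < α ∧
          w.1 ∈ r.1 ∧ w.2.1 ∈ r.2)
        ≤ pe μ (fun w => w.1 ∈ SA ∨ w.2.1 ∈ SB) := pe_mono hμ0 himp
      _ ≤ pe μ (fun w => w.1 ∈ SA) + pe μ (fun w => w.2.1 ∈ SB) := pe_or_le hμ0 _ _
      _ = PA SA + PB SB := by rw [peMemX, peMemY]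
      _ ≤ Real.sqrt α + Real.sqrt α := add_le_add hPASA hPBSB
      _ = 2 * Real.sqrt α := by ring

end Paper
end
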